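/- Let X be a closed linear subspace of c₀ (the Banach space of scalar sequences converging to 0 with the supremum norm), and let Y be a strictly convex Banach space over the same scalar field. Then every norm attaining bounded linear operator T : X → Y has finite rank, i.e., if there is x₀ ∈ X with ‖x₀‖ = 1 and ‖T x₀‖ = ‖T‖, then the range of T is finite dimensional. -/

import Mathlib

open BoundedContinuousFunction

set_option maxHeartbeats 1000000 in
set_option synthInstance.maxHeartbeats 400000 in
/-- If `X` is a closed subspace of `c₀` (realized as a closed submodule of
`ℓ∞ = ℕ →ᵇ 𝕜` all of whose elements converge to `0`, i.e. lie in `c₀`) and `Y` is a strictly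
convex Banach space, then every norm attaining bounded linear operator `T : X → Y` has finite
rank. -/
theorem norm_attaining_from_subspace_c0_to_strictly_convex_finite_rank
    {𝕜 Y : Type*} [RCLike 𝕜]
    [NormedAddCommGroup Y] [NormedSpace 𝕜 Y] [CompleteSpace Y]
    (hY : ∀ y₁ y₂ : Y, ‖y₁‖ ≤ 1 → ‖y₂‖ ≤ 1 → y₁ ≠ y₂ → ‖y₁ + y₂‖ < 2)
    (X : Submodule 𝕜 (ℕ →ᵇ 𝕜)) (hXclosed : IsClosed (X : Set (ℕ →ᵇ 𝕜)))
    (hXc₀ : ∀ f ∈ X, Filter.Tendsto (⇑f) Filter.atTop (nhds (0 : 𝕜)))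
    (T : ↥X →L[𝕜] Y) (x₀ : ↥X) (hx₀ : ‖x₀‖ = 1) (hTx₀ : ‖T x₀‖ = ‖T‖) :
    FiniteDimensional 𝕜 (LinearMap.range (T : ↥X →ₗ[𝕜] Y)) := by
  -- choose N with ‖x₀ n‖ ≤ 1/2 for n ≥ N
  obtain ⟨N, hN⟩ : ∃ N, ∀ n ≥ N, ‖(x₀ : ℕ →ᵇ 𝕜) n‖ ≤ 1/2 := by
    have h := (hXc₀ _ x₀.2)
    rw [Metric.tendsto_atTop] at h
    obtain ⟨N, hN⟩ := h (1/2) (by norm_num)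
    exact ⟨N, fun n hn => by simpa [dist_eq_norm] using (hN n hn).le⟩
  -- the coordinate projection
  set π : ↥X →ₗ[𝕜] (Fin N → 𝕜) :=
    { toFun := fun x i => (x : ℕ →ᵇ 𝕜) i
      map_add' := by intros; ext; simp
      map_smul' := by intros; ext; simp } with hπ
  -- small elements of ker π are killed by T
  have hsmall : ∀ x : ↥X, (∀ i : Fin N, (x : ℕ →ᵇ 𝕜) i = 0) → ‖x‖ ≤ 1/2 → T x = 0 := by
    intro x hx hxn
    rcases eq_or_lt_of_le (norm_nonneg T) with hT0 | hTpos
    · have h' : ‖T x‖ ≤ 0 := by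
        have := T.le_opNorm x
        rw [← hT0, zero_mul] at this
        exact this
      exact norm_le_zero_iff.mp h'
    have key : ∀ s : ↥X, (s : ℕ →ᵇ 𝕜) = (x₀ : ℕ →ᵇ 𝕜) + (x : ℕ →ᵇ 𝕜) ∨
        (s : ℕ →ᵇ 𝕜) = (x₀ : ℕ →ᵇ 𝕜) - (x : ℕ →ᵇ 𝕜) → True := fun _ _ => trivial
    have hb : ∀ (ε : 𝕜), ‖ε‖ = 1 → ‖x₀ + ε • x‖ ≤ 1 := by
      intro ε hε
      have : ‖((x₀ + ε • x : ↥X) : ℕ →ᵇ 𝕜)‖ ≤ 1 := by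
        apply (BoundedContinuousFunction.norm_le (by norm_num)).mpr
        intro n
        by_cases hn : n < N
        · have hxi : (x : ℕ →ᵇ 𝕜) n = 0 := hx ⟨n, hn⟩
          have : ‖(x₀ : ℕ →ᵇ 𝕜) n‖ ≤ ‖(x₀ : ℕ →ᵇ 𝕜)‖ :=
            BoundedContinuousFunction.norm_coe_le_norm _ n
          simpa [hxi, hx₀] using this.trans_eq (by rw [← hx₀]; rfl)
        · push_neg at hn
          have h1 := hN n hn
          have h2 : ‖(x : ℕ →ᵇ 𝕜) n‖ ≤ 1/2 := by
            have := BoundedContinuousFunction.norm_coe_le_norm (x : ℕ →ᵇ 𝕜) n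
            exact this.trans hxn
          calc ‖((x₀ + ε • x : ↥X) : ℕ →ᵇ 𝕜) n‖
              = ‖(x₀ : ℕ →ᵇ 𝕜) n + ε * (x : ℕ →ᵇ 𝕜) n‖ := by simp
            _ ≤ ‖(x₀ : ℕ →ᵇ 𝕜) n‖ + ‖ε * (x : ℕ →ᵇ 𝕜) n‖ := norm_add_le _ _
            _ ≤ 1/2 + 1/2 := by
                gcongr
                rw [norm_mul, hε, one_mul]; exact h2
            _ = 1 := by norm_num
      exact this
    have h1 : ‖x₀ + x‖ ≤ 1 := by simpa using hb 1 (by simp)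
    have h2 : ‖x₀ - x‖ ≤ 1 := by
      have := hb (-1) (by simp)
      simpa [sub_eq_add_neg] using this
    set c : 𝕜 := ((‖T‖⁻¹ : ℝ) : 𝕜) with hc
    have hcn : ‖c‖ = ‖T‖⁻¹ := by
      rw [hc, RCLike.norm_ofReal, abs_of_nonneg (inv_nonneg.mpr (norm_nonneg T))]
    have hy1 : ‖c • T (x₀ + x)‖ ≤ 1 := by
      rw [norm_smul, hcn]
      calc ‖T‖⁻¹ * ‖T (x₀ + x)‖ ≤ ‖T‖⁻¹ * (‖T‖ * ‖x₀ + x‖) := by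
            gcongr; exact T.le_opNorm _
        _ ≤ ‖T‖⁻¹ * (‖T‖ * 1) := by gcongr
        _ = 1 := by field_simp
    have hy2 : ‖c • T (x₀ - x)‖ ≤ 1 := by
      rw [norm_smul, hcn]
      calc ‖T‖⁻¹ * ‖T (x₀ - x)‖ ≤ ‖T‖⁻¹ * (‖T‖ * ‖x₀ - x‖) := by
            gcongr; exact T.le_opNorm _
        _ ≤ ‖T‖⁻¹ * (‖T‖ * 1) := by gcongr
        _ = 1 := by field_simp
    have hsum : ‖c • T (x₀ + x) + c • T (x₀ - x)‖ = 2 := by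
      have : c • T (x₀ + x) + c • T (x₀ - x) = c • ((2 : 𝕜) • T x₀) := by
        rw [← smul_add, ← map_add]
        congr 1
        have : (x₀ + x) + (x₀ - x) = (2 : 𝕜) • x₀ := by
          rw [two_smul]; abel
        rw [this, map_smul]
      rw [this, norm_smul, norm_smul, hcn, hTx₀]
      have h2n : ‖(2 : 𝕜)‖ = 2 := by
        simpa using (RCLike.norm_ofNat (K := 𝕜) 2)
      rw [h2n]
      field_simp
    have heq : c • T (x₀ + x) = c • T (x₀ - x) := by
      by_contra hne
      have := hY _ _ hy1 hy2 hne
      rw [hsum] at this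
      exact lt_irrefl _ this
    have hc0 : c ≠ 0 := by
      rw [hc]
      simp only [ne_eq, RCLike.ofReal_eq_zero]
      exact inv_ne_zero (ne_of_gt hTpos)
    have hTeq : T (x₀ + x) = T (x₀ - x) := by
      have h' := congrArg (fun y => c⁻¹ • y) heq
      simpa [smul_smul, inv_mul_cancel₀ hc0] using h'
    have : T x + T x = 0 := by
      have := sub_eq_zero.mpr hTeq
      rw [map_add, map_sub] at this
      have h' : T x + T x = (T x₀ + T x) - (T x₀ - T x) := by abel
      rw [h', this]
    have h2 : (2 : 𝕜) • T x = 0 := by rw [two_smul]; exact this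
    have := smul_eq_zero.mp h2
    rcases this with h | h
    · exact absurd h (by norm_num)
    · exact h
  -- all of ker π is killed by T
  have hker : ∀ x ∈ LinearMap.ker π, T x = 0 := by
    intro x hxk
    have hx : ∀ i : Fin N, (x : ℕ →ᵇ 𝕜) i = 0 := by
      intro i
      have := LinearMap.mem_ker.mp hxk
      exact congrFun this i
    by_cases hx0 : x = 0
    · simp [hx0]
    have hxn : ‖x‖ ≠ 0 := by simpa [norm_eq_zero] using hx0
    have hxpos : (0:ℝ) < ‖x‖ := lt_of_le_of_ne (norm_nonneg x) (Ne.symm hxn)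
    set c : 𝕜 := (((2 * ‖x‖)⁻¹ : ℝ) : 𝕜) with hc
    have hc0 : c ≠ 0 := by
      rw [hc]
      simp only [ne_eq, RCLike.ofReal_eq_zero]
      positivity
    have hcx : T (c • x) = 0 := by
      apply hsmall
      · intro i; simp [hx i]
      · have hns : ‖c • x‖ = ‖c‖ * ‖x‖ := norm_smul c x
        rw [hns, hc, RCLike.norm_ofReal, abs_of_pos (by positivity)]
        rw [mul_inv, mul_assoc, inv_mul_cancel₀ hxn]
        norm_num
    rw [map_smul] at hcx
    exact (smul_eq_zero.mp hcx).resolve_left hc0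
  -- factor T through the finite-dimensional quotient
  have hle : LinearMap.ker π ≤ LinearMap.ker (T : ↥X →ₗ[𝕜] Y) := by
    intro x hx
    simpa using hker x hx
  set Tbar := (LinearMap.ker π).liftQ (T : ↥X →ₗ[𝕜] Y) hle with hTbar
  have hfd : FiniteDimensional 𝕜 (↥X ⧸ LinearMap.ker π) :=
    LinearEquiv.finiteDimensional (π.quotKerEquivRange).symm
  have hrange : LinearMap.range (T : ↥X →ₗ[𝕜] Y) = LinearMap.range Tbar := by
    rw [hTbar, Submodule.range_liftQ]
  rw [hrange]
  infer_instance
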